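/- Suppose a normalized loss satisfies 0 ≤ L_norm(f(x),k) ≤ 1/(K-1) for all k and ∑_k L_norm(f(x),k) = 1, and suppose the clean-risk minimizer f* achieves R(f*) = 0 (so L_norm(f*(x), y) = 0 for all samples, forcing L_norm(f*(x), k) = 1/(K-1) for all k ≠ y). Then under asymmetric noise with 1 - η_y - η_{yk} > 0 for all y and k ≠ y, any noisy-risk minimizer f_η* satisfies L_norm(f_η*(x), k) = 1/(K-1) for all k ≠ y at every sample, hence f_η* has the same loss values as f*. -/

import Mathlib

open Finset

theorem asymmetric_noise_tolerance {n K : ℕ} (hK : 2 ≤ K) (hn : 0 < n)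
    (y : Fin n → Fin K)
    (ηy : Fin K → ℝ) (ηyk : Fin K → Fin K → ℝ)
    (hnoise : ∀ c : Fin K, (1 - ηy c) + ∑ k ∈ Finset.univ.erase c, ηyk c k = 1)
    (hdom : ∀ c k : Fin K, k ≠ c → 0 < 1 - ηy c - ηyk c k)
    (M Mstar : Fin n → Fin K → ℝ)
    (hM0 : ∀ i k, 0 ≤ M i k) (hM1 : ∀ i k, M i k ≤ 1 / ((K : ℝ) - 1))
    (hMsum : ∀ i, ∑ k, M i k = 1)
    (hMstar0 : ∀ i, Mstar i (y i) = 0)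
    (hMstar1 : ∀ i k, k ≠ y i → Mstar i k = 1 / ((K : ℝ) - 1))
    (hrisk : (1 / (n : ℝ)) * ∑ i, ((1 - ηy (y i)) * M i (y i) +
          ∑ k ∈ Finset.univ.erase (y i), ηyk (y i) k * M i k) ≤
        (1 / (n : ℝ)) * ∑ i, ((1 - ηy (y i)) * Mstar i (y i) +
          ∑ k ∈ Finset.univ.erase (y i), ηyk (y i) k * Mstar i k)) :
    (∀ i, ∀ k, k ≠ y i → M i k = 1 / ((K : ℝ) - 1)) ∧ (∀ i k, M i k = Mstar i k) := by
  have hKr : (0:ℝ) < (K:ℝ) - 1 := by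
    have : (2:ℝ) ≤ (K:ℝ) := by exact_mod_cast hK
    linarith
  set Kr : ℝ := (K:ℝ) - 1 with hKrdef
  set f : Fin n → ℝ := fun i => (1 - ηy (y i)) * M i (y i) +
      ∑ k ∈ Finset.univ.erase (y i), ηyk (y i) k * M i k with hf
  set g : Fin n → ℝ := fun i => (1 - ηy (y i)) * Mstar i (y i) +
      ∑ k ∈ Finset.univ.erase (y i), ηyk (y i) k * Mstar i k with hg
  -- cardinality of erase
  have hcard : ∀ c : Fin K, (((Finset.univ.erase c).card : ℝ)) = Kr := by
    intro c
    rw [Finset.card_erase_of_mem (Finset.mem_univ _), Finset.card_univ, Fintype.card_fin]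
    have h1 : 1 ≤ K := le_trans (by norm_num) hK
    push_cast [h1]
    ring
  -- key identity
  have hkey : ∀ i, f i - g i =
      ∑ k ∈ Finset.univ.erase (y i), (1 - ηy (y i) - ηyk (y i) k) * (1 / Kr - M i k) := by
    intro i
    have hc : M i (y i) = 1 - ∑ k ∈ Finset.univ.erase (y i), M i k := by
      have := Finset.add_sum_erase Finset.univ (M i) (Finset.mem_univ (y i))
      rw [hMsum i] at this
      linarith
    have hexp : ∑ k ∈ Finset.univ.erase (y i), (1 - ηy (y i) - ηyk (y i) k) * (1 / Kr - M i k)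
        = ∑ k ∈ Finset.univ.erase (y i),
            ((1 - ηy (y i)) * (1 / Kr) - ηyk (y i) k * (1 / Kr)
              - (1 - ηy (y i)) * M i k + ηyk (y i) k * M i k) := by
      apply Finset.sum_congr rfl
      intro k _
      ring
    rw [hexp]
    simp only [Finset.sum_add_distrib, Finset.sum_sub_distrib, Finset.sum_const,
      nsmul_eq_mul, ← Finset.sum_mul, ← Finset.mul_sum, hcard]
    have hstar : ∀ k ∈ Finset.univ.erase (y i), ηyk (y i) k * Mstar i k
        = ηyk (y i) k * (1 / Kr) := by
      intro k hk
      rw [hMstar1 i k (Finset.ne_of_mem_erase hk)]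
    have hgval : g i = (∑ k ∈ Finset.univ.erase (y i), ηyk (y i) k) * (1 / Kr) := by
      rw [hg]
      simp only
      rw [hMstar0 i, Finset.sum_congr rfl hstar, ← Finset.sum_mul]
      ring
    rw [hf, hgval]
    simp only
    rw [hc]
    field_simp
    ring
  -- sum inequality
  have hsum : ∑ i, f i ≤ ∑ i, g i := by
    have hnpos : (0:ℝ) < 1 / (n:ℝ) := by positivity
    exact le_of_mul_le_mul_left (by simpa using hrisk) hnpos
  have hterm_nonneg : ∀ i, 0 ≤ f i - g i := by
    intro i
    rw [hkey i]
    apply Finset.sum_nonneg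
    intro k hk
    have h1 := hdom (y i) k (Finset.ne_of_mem_erase hk)
    have h2 := hM1 i k
    have : 0 ≤ 1 / Kr - M i k := by rw [hKrdef]; linarith
    positivity
  have hzero : ∀ i ∈ (Finset.univ : Finset (Fin n)), f i - g i = 0 := by
    rw [← Finset.sum_eq_zero_iff_of_nonneg (fun i _ => hterm_nonneg i)]
    have h1 : ∑ i, (f i - g i) = ∑ i, f i - ∑ i, g i := Finset.sum_sub_distrib _ _
    have h2 : 0 ≤ ∑ i, (f i - g i) :=
      Finset.sum_nonneg (fun i _ => hterm_nonneg i)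
    linarith
  have hMeq : ∀ i, ∀ k, k ≠ y i → M i k = 1 / Kr := by
    intro i k hk
    have h0 := hzero i (Finset.mem_univ i)
    rw [hkey i] at h0
    have hall := (Finset.sum_eq_zero_iff_of_nonneg (fun k hk => by
      have h1 := hdom (y i) k (Finset.ne_of_mem_erase hk)
      have h2 := hM1 i k
      have : 0 ≤ 1 / Kr - M i k := by rw [hKrdef]; linarith
      positivity)).mp h0
    have hkmem : k ∈ Finset.univ.erase (y i) := Finset.mem_erase.mpr ⟨hk, Finset.mem_univ k⟩
    have := hall k hkmem
    have h1 := hdom (y i) k hk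
    rcases mul_eq_zero.mp this with h | h
    · linarith
    · linarith
  refine ⟨hMeq, fun i k => ?_⟩
  by_cases hk : k = y i
  · rw [hk]
    have hc : M i (y i) = 1 - ∑ j ∈ Finset.univ.erase (y i), M i j := by
      have := Finset.add_sum_erase Finset.univ (M i) (Finset.mem_univ (y i))
      rw [hMsum i] at this
      linarith
    have hs : ∑ j ∈ Finset.univ.erase (y i), M i j = ∑ j ∈ Finset.univ.erase (y i), 1 / Kr :=
      Finset.sum_congr rfl (fun j hj => hMeq i j (Finset.ne_of_mem_erase hj))
    rw [hMstar0 i, hc, hs, Finset.sum_const, nsmul_eq_mul, hcard]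
    field_simp
    ring
  · rw [hMeq i k hk, hMstar1 i k hk]
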